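/- Let d ≥ 2. Let g : ℝ → ℝ be non-decreasing and continuous with g(1+γ) < G and g(−1−γ) > −G for some G ≥ 0. Let the margin-based loss φ : ℝ → [0,∞) be bounded, continuous, non-increasing and quasi-concave even, and assume φ(g(−t)−G) > φ(G−g(−t)) and g(−t) + g(t) ≥ 0 for every t ∈ [0,1]. Then φ is H_g-calibrated with respect to the adversarial 0/1 loss ℓ_γ if and only if for every t ∈ [0,1]: φ(G−g(−t)) + φ(g(−t)−G) = φ(g(t)+G) + φ(−g(t)−G), and min{φ(Ā(t)) + φ(−Ā(t)), φ(A̲(t)) + φ(−A̲(t))} > φ(G−g(−t)) + φ(g(−t)−G), where Ā(t) = max_{s ∈ [−t,t]} (g(s) − g(s−γ)) and A̲(t) = min_{s ∈ [−t,t]} (g(s) − g(s+γ)). -/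

import Mathlib

open scoped RealInnerProductSpace

noncomputable section

/-- A loss assigns a value to a predictor `f`, a point `x`, and a label `y` (±1). -/
abbrev Loss (d : ℕ) := ((EuclideanSpace ℝ (Fin d)) → ℝ) → (EuclideanSpace ℝ (Fin d)) → ℝ → ℝ

variable {d : ℕ}

/-- The inner (conditional) ℓ-risk. -/
def innerRisk (ℓ : Loss d) (f : EuclideanSpace ℝ (Fin d) → ℝ)
    (x : EuclideanSpace ℝ (Fin d)) (η : ℝ) : ℝ :=
  η * ℓ f x 1 + (1 - η) * ℓ f x (-1)

/-- The minimal inner ℓ-risk over a hypothesis set `H`. -/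
def minInnerRisk (ℓ : Loss d) (H : Set (EuclideanSpace ℝ (Fin d) → ℝ))
    (x : EuclideanSpace ℝ (Fin d)) (η : ℝ) : ℝ :=
  ⨅ f : H, innerRisk ℓ f x η

/-- ℓ₁ is H-calibrated with respect to ℓ₂. -/
def Calibrated (H : Set (EuclideanSpace ℝ (Fin d) → ℝ)) (ℓ₁ ℓ₂ : Loss d) : Prop :=
  ∀ ε > (0:ℝ), ∀ η ∈ Set.Icc (0:ℝ) 1, ∀ x : EuclideanSpace ℝ (Fin d), ‖x‖ ≤ 1 →
    ∃ δ > (0:ℝ), ∀ f ∈ H,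
      innerRisk ℓ₁ f x η < minInnerRisk ℓ₁ H x η + δ →
      innerRisk ℓ₂ f x η < minInnerRisk ℓ₂ H x η + ε

/-- The adversarial 0/1 loss with perturbation radius γ. -/
def advLoss (γ : ℝ) : Loss d := fun f x y =>
  ⨆ x' : Metric.closedBall x γ, (if y * f ↑x' ≤ 0 then (1:ℝ) else 0)

/-- A margin-based loss viewed as a loss. -/
def marginLoss (φ : ℝ → ℝ) : Loss d := fun f x y => φ (y * f x)

/-- The supremum-based surrogate of a margin-based loss. -/
def supLoss (γ : ℝ) (φ : ℝ → ℝ) : Loss d := fun f x y =>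
  ⨆ x' : Metric.closedBall x γ, φ (y * f ↑x')

/-- Infimum of f over the closed γ-ball around x. -/
def infBall (γ : ℝ) (f : EuclideanSpace ℝ (Fin d) → ℝ) (x : EuclideanSpace ℝ (Fin d)) : ℝ :=
  ⨅ x' : Metric.closedBall x γ, f ↑x'

/-- Supremum of f over the closed γ-ball around x. -/
def supBall (γ : ℝ) (f : EuclideanSpace ℝ (Fin d) → ℝ) (x : EuclideanSpace ℝ (Fin d)) : ℝ :=
  ⨆ x' : Metric.closedBall x γ, f ↑x'

/-- x is a distinguishing point for H. -/
def Distinguishing (γ : ℝ) (H : Set (EuclideanSpace ℝ (Fin d) → ℝ))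
    (x : EuclideanSpace ℝ (Fin d)) : Prop :=
  ‖x‖ ≤ 1 ∧ (∃ f ∈ H, 0 < infBall γ f x) ∧ (∃ g ∈ H, supBall γ g x < 0)

/-- H is regular for adversarial calibration. -/
def RegularAdv (γ : ℝ) (H : Set (EuclideanSpace ℝ (Fin d) → ℝ)) : Prop :=
  ∃ x, Distinguishing γ H x

/-- H is symmetric. -/
def SymmetricH (H : Set (EuclideanSpace ℝ (Fin d) → ℝ)) : Prop :=
  ∀ f ∈ H, -f ∈ H

/-- Linear hypothesis set. -/
def Hlin (d : ℕ) : Set (EuclideanSpace ℝ (Fin d) → ℝ) :=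
  { f | ∃ w : EuclideanSpace ℝ (Fin d), ‖w‖ = 1 ∧ f = fun x => (inner ℝ w x : ℝ) }

/-- Generalized linear hypothesis set. -/
def Hg (d : ℕ) (g : ℝ → ℝ) (G : ℝ) : Set (EuclideanSpace ℝ (Fin d) → ℝ) :=
  { f | ∃ (w : EuclideanSpace ℝ (Fin d)) (b : ℝ), ‖w‖ = 1 ∧ |b| ≤ G ∧
      f = fun x => g (inner ℝ w x : ℝ) + b }

/-- ReLU-based hypothesis set. -/
def Hrelu (d : ℕ) (G : ℝ) : Set (EuclideanSpace ℝ (Fin d) → ℝ) :=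
  Hg d (fun t => max t 0) G

/-- One-layer ReLU neural network hypothesis set. -/
def Hnn (d n : ℕ) (Λ W : ℝ) : Set (EuclideanSpace ℝ (Fin d) → ℝ) :=
  { f | ∃ (u : Fin n → ℝ) (w : Fin n → EuclideanSpace ℝ (Fin d)),
      (∑ j, |u j|) ≤ Λ ∧ (∀ j, ‖w j‖ ≤ W) ∧
      f = fun x => ∑ j, u j * max (inner ℝ (w j) x : ℝ) 0 }

/-- All (Borel) measurable functions. -/
def Hall (d : ℕ) : Set (EuclideanSpace ℝ (Fin d) → ℝ) :=
  { f | Measurable f }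

/-- The ρ-margin loss. -/
def phiRho (ρ t : ℝ) : ℝ := min 1 (max 0 (1 - t / ρ))


/-- Ā(t) = max_{s ∈ [−t,t]} (g(s) − g(s−γ)). -/
def Abar (g : ℝ → ℝ) (γ t : ℝ) : ℝ :=
  sSup ((fun s => g s - g (s - γ)) '' Set.Icc (-t) t)

/-- A̲(t) = min_{s ∈ [−t,t]} (g(s) − g(s+γ)). -/
def Alow (g : ℝ → ℝ) (γ t : ℝ) : ℝ :=
  sInf ((fun s => g s - g (s + γ)) '' Set.Icc (-t) t)

set_option linter.unusedVariables false

variable {d : ℕ}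

section adv

lemma ball_nonempty {γ : ℝ} (hγ0 : 0 < γ) (x : EuclideanSpace ℝ (Fin d)) :
    Nonempty (Metric.closedBall x γ) :=
  ⟨⟨x, Metric.mem_closedBall_self hγ0.le⟩⟩

lemma inner_ball_bounds {γ : ℝ} {w x x' : EuclideanSpace ℝ (Fin d)} (hw : ‖w‖ = 1)
    (hx' : x' ∈ Metric.closedBall x γ) :
    ⟪w, x⟫ - γ ≤ ⟪w, x'⟫ ∧ ⟪w, x'⟫ ≤ ⟪w, x⟫ + γ := by
  have h1 : |⟪w, x' - x⟫| ≤ ‖w‖ * ‖x' - x‖ := abs_real_inner_le_norm w (x' - x)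
  rw [hw, one_mul] at h1
  have h2 : ‖x' - x‖ ≤ γ := by
    rw [← dist_eq_norm]
    exact Metric.mem_closedBall.mp hx'
  have h3 : |⟪w, x'⟫ - ⟪w, x⟫| ≤ γ := by
    rw [← inner_sub_right]
    exact h1.trans h2
  rw [abs_le] at h3
  constructor <;> linarith [h3.1, h3.2]

lemma shift_mem_ball {γ : ℝ} {w : EuclideanSpace ℝ (Fin d)} (hw : ‖w‖ = 1)
    (x : EuclideanSpace ℝ (Fin d)) (s : ℝ) (hs : |s| ≤ γ) :
    x + s • w ∈ Metric.closedBall x γ := by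
  rw [Metric.mem_closedBall, dist_eq_norm]
  have h : x + s • w - x = s • w := by abel
  rw [h, norm_smul, hw, mul_one]
  simpa using hs

lemma inner_shift {w : EuclideanSpace ℝ (Fin d)} (hw : ‖w‖ = 1)
    (x : EuclideanSpace ℝ (Fin d)) (s : ℝ) : ⟪w, x + s • w⟫ = ⟪w, x⟫ + s := by
  rw [inner_add_right, real_inner_smul_right, real_inner_self_eq_norm_sq, hw]
  ring

lemma advLoss_pos {γ : ℝ} (hγ0 : 0 < γ) {g : ℝ → ℝ} (hgmono : Monotone g)
    {w : EuclideanSpace ℝ (Fin d)} (hw : ‖w‖ = 1) (b : ℝ) (x : EuclideanSpace ℝ (Fin d)) :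
    advLoss γ (fun z => g ⟪w, z⟫ + b) x 1 =
      if g (⟪w, x⟫ - γ) + b ≤ 0 then 1 else 0 := by
  have hne : Nonempty (Metric.closedBall x γ) := ball_nonempty hγ0 x
  unfold advLoss
  have hbdd : BddAbove (Set.range fun x' : Metric.closedBall x γ =>
      (if (1:ℝ) * (g ⟪w, (x':EuclideanSpace ℝ (Fin d))⟫ + b) ≤ 0 then (1:ℝ) else 0)) := by
    refine ⟨1, ?_⟩
    rintro v ⟨x', rfl⟩
    dsimp only
    split <;> norm_num
  split_ifs with h
  · apply le_antisymm
    · apply ciSup_le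
      intro x'
      dsimp only
      split <;> norm_num
    · have hmem := shift_mem_ball hw x (-γ) (by rw [abs_neg, abs_of_pos hγ0])
      have hval : (1:ℝ) * (g ⟪w, x + (-γ) • w⟫ + b) ≤ 0 := by
        rw [one_mul, inner_shift hw, ← sub_eq_add_neg]
        exact h
      have hle := le_ciSup hbdd (⟨x + (-γ) • w, hmem⟩ : Metric.closedBall x γ)
      simp only [hval, if_pos] at hle
      exact hle
  · push_neg at h
    apply le_antisymm
    · apply ciSup_le
      intro x'
      have hb := (inner_ball_bounds hw x'.2).1
      have hn : ¬ ((1:ℝ) * (g ⟪w, (x':EuclideanSpace ℝ (Fin d))⟫ + b) ≤ 0) := by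
        rw [one_mul]
        push_neg
        have := hgmono hb
        linarith
      dsimp only
      rw [if_neg hn]
    · have hle := le_ciSup hbdd (Classical.arbitrary (Metric.closedBall x γ))
      refine le_trans ?_ hle
      split <;> norm_num

lemma advLoss_neg {γ : ℝ} (hγ0 : 0 < γ) {g : ℝ → ℝ} (hgmono : Monotone g)
    {w : EuclideanSpace ℝ (Fin d)} (hw : ‖w‖ = 1) (b : ℝ) (x : EuclideanSpace ℝ (Fin d)) :
    advLoss γ (fun z => g ⟪w, z⟫ + b) x (-1) =
      if 0 ≤ g (⟪w, x⟫ + γ) + b then 1 else 0 := by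
  have hne : Nonempty (Metric.closedBall x γ) := ball_nonempty hγ0 x
  unfold advLoss
  have hbdd : BddAbove (Set.range fun x' : Metric.closedBall x γ =>
      (if (-1:ℝ) * (g ⟪w, (x':EuclideanSpace ℝ (Fin d))⟫ + b) ≤ 0 then (1:ℝ) else 0)) := by
    refine ⟨1, ?_⟩
    rintro v ⟨x', rfl⟩
    dsimp only
    split <;> norm_num
  split_ifs with h
  · apply le_antisymm
    · apply ciSup_le
      intro x'
      dsimp only
      split <;> norm_num
    · have hmem := shift_mem_ball hw x γ (by rw [abs_of_pos hγ0])
      have hval : (-1:ℝ) * (g ⟪w, x + γ • w⟫ + b) ≤ 0 := by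
        rw [inner_shift hw]
        nlinarith
      have hle := le_ciSup hbdd (⟨x + γ • w, hmem⟩ : Metric.closedBall x γ)
      simp only [hval, if_pos] at hle
      exact hle
  · push_neg at h
    apply le_antisymm
    · apply ciSup_le
      intro x'
      have hb := (inner_ball_bounds hw x'.2).2
      have hn : ¬ ((-1:ℝ) * (g ⟪w, (x':EuclideanSpace ℝ (Fin d))⟫ + b) ≤ 0) := by
        have := hgmono hb
        push_neg
        nlinarith
      dsimp only
      rw [if_neg hn]
    · have hle := le_ciSup hbdd (Classical.arbitrary (Metric.closedBall x γ))
      refine le_trans ?_ hle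
      split <;> norm_num

end adv
section risks

lemma mem_Hg {g : ℝ → ℝ} {G : ℝ} {w : EuclideanSpace ℝ (Fin d)} {b : ℝ}
    (hw : ‖w‖ = 1) (hb : |b| ≤ G) : (fun z => g ⟪w, z⟫ + b) ∈ Hg d g G :=
  ⟨w, b, hw, hb, rfl⟩

lemma innerRisk_margin (φ : ℝ → ℝ) (g : ℝ → ℝ) (w : EuclideanSpace ℝ (Fin d)) (b : ℝ)
    (x : EuclideanSpace ℝ (Fin d)) (η : ℝ) :
    innerRisk (marginLoss φ) (fun z => g ⟪w, z⟫ + b) x η =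
      η * φ (g ⟪w, x⟫ + b) + (1 - η) * φ (-(g ⟪w, x⟫ + b)) := by
  simp [innerRisk, marginLoss, neg_one_mul]

lemma innerRisk_adv {γ : ℝ} (hγ0 : 0 < γ) {g : ℝ → ℝ} (hgmono : Monotone g)
    {w : EuclideanSpace ℝ (Fin d)} (hw : ‖w‖ = 1) (b : ℝ) (x : EuclideanSpace ℝ (Fin d)) (η : ℝ) :
    innerRisk (advLoss γ) (fun z => g ⟪w, z⟫ + b) x η =
      η * (if g (⟪w, x⟫ - γ) + b ≤ 0 then 1 else 0)
        + (1 - η) * (if 0 ≤ g (⟪w, x⟫ + γ) + b then 1 else 0) := by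
  rw [innerRisk, advLoss_pos hγ0 hgmono hw, advLoss_neg hγ0 hgmono hw]

lemma minInnerRisk_eq {ℓ : Loss d} {H : Set (EuclideanSpace ℝ (Fin d) → ℝ)}
    {x : EuclideanSpace ℝ (Fin d)} {η m : ℝ}
    (hub : ∃ f ∈ H, innerRisk ℓ f x η ≤ m)
    (hlb : ∀ f ∈ H, m ≤ innerRisk ℓ f x η) :
    minInnerRisk ℓ H x η = m := by
  obtain ⟨f₀, hf₀, hle⟩ := hub
  have hne : Nonempty H := ⟨⟨f₀, hf₀⟩⟩
  apply le_antisymm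
  · refine le_trans (ciInf_le ?_ (⟨f₀, hf₀⟩ : H)) hle
    exact ⟨m, by rintro v ⟨f, rfl⟩; exact hlb f f.2⟩
  · exact le_ciInf fun f => hlb f f.2

lemma unit_single (hd : 0 < d) :
    ‖EuclideanSpace.single (⟨0, hd⟩ : Fin d) (1:ℝ)‖ = 1 := by
  rw [EuclideanSpace.norm_single]; norm_num

lemma abs_inner_le {w x : EuclideanSpace ℝ (Fin d)} (hw : ‖w‖ = 1) :
    |⟪w, x⟫| ≤ ‖x‖ := by
  have := abs_real_inner_le_norm w x
  rwa [hw, one_mul] at this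

lemma minInnerRisk_adv {γ : ℝ} (hγ0 : 0 < γ) {g : ℝ → ℝ} (hgmono : Monotone g)
    {G : ℝ} (hG : 0 ≤ G) (hg1 : g (1 + γ) < G) (hg2 : -G < g (-1 - γ))
    (hd : 0 < d) {x : EuclideanSpace ℝ (Fin d)} (hx : ‖x‖ ≤ 1)
    {η : ℝ} (hη : η ∈ Set.Icc (0:ℝ) 1) :
    minInnerRisk (advLoss γ) (Hg d g G) x η = min η (1 - η) := by
  obtain ⟨hη0, hη1⟩ := hη
  set w₀ := EuclideanSpace.single (⟨0, hd⟩ : Fin d) (1:ℝ) with hw₀def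
  have hw₀ : ‖w₀‖ = 1 := unit_single hd
  have hu₀ : |⟪w₀, x⟫| ≤ 1 := (abs_inner_le hw₀).trans hx
  rcases le_total η (1 - η) with hcase | hcase
  · rw [min_eq_left hcase]
    apply minInnerRisk_eq
    · refine ⟨fun z => g ⟪w₀, z⟫ + (-G), mem_Hg hw₀ (by rw [abs_neg, abs_of_nonneg hG]), ?_⟩
      rw [innerRisk_adv hγ0 hgmono hw₀]
      have h1 : g (⟪w₀, x⟫ - γ) + (-G) ≤ 0 := by
        have := hgmono (show ⟪w₀, x⟫ - γ ≤ 1 + γ by cases abs_le.mp hu₀; linarith)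
        linarith
      have h2 : ¬ (0 ≤ g (⟪w₀, x⟫ + γ) + (-G)) := by
        have := hgmono (show ⟪w₀, x⟫ + γ ≤ 1 + γ by cases abs_le.mp hu₀; linarith)
        push_neg; linarith
      rw [if_pos h1, if_neg h2]; ring_nf; rfl
    · rintro f ⟨w, b, hw, hb, rfl⟩
      rw [innerRisk_adv hγ0 hgmono hw]
      rcases le_or_gt (g (⟪w, x⟫ - γ) + b) 0 with h | h
      · rw [if_pos h]
        have : (0:ℝ) ≤ (1 - η) * (if 0 ≤ g (⟪w, x⟫ + γ) + b then 1 else 0) := by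
          apply mul_nonneg (by linarith); split <;> norm_num
        linarith
      · rw [if_neg (not_le.mpr h)]
        have h2 : 0 ≤ g (⟪w, x⟫ + γ) + b := by
          have := hgmono (show ⟪w, x⟫ - γ ≤ ⟪w, x⟫ + γ by linarith)
          linarith
        rw [if_pos h2]
        linarith
  · rw [min_eq_right hcase]
    apply minInnerRisk_eq
    · refine ⟨fun z => g ⟪w₀, z⟫ + G, mem_Hg hw₀ (by rw [abs_of_nonneg hG]), ?_⟩
      rw [innerRisk_adv hγ0 hgmono hw₀]
      have h1 : ¬ (g (⟪w₀, x⟫ - γ) + G ≤ 0) := by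
        have := hgmono (show -1 - γ ≤ ⟪w₀, x⟫ - γ by cases abs_le.mp hu₀; linarith)
        push_neg; linarith
      have h2 : 0 ≤ g (⟪w₀, x⟫ + γ) + G := by
        have := hgmono (show -1 - γ ≤ ⟪w₀, x⟫ + γ by cases abs_le.mp hu₀; linarith)
        linarith
      rw [if_neg h1, if_pos h2]; ring_nf; rfl
    · rintro f ⟨w, b, hw, hb, rfl⟩
      rw [innerRisk_adv hγ0 hgmono hw]
      rcases le_or_gt 0 (g (⟪w, x⟫ + γ) + b) with h | h
      · rw [if_pos h]
        have : (0:ℝ) ≤ η * (if g (⟪w, x⟫ - γ) + b ≤ 0 then 1 else 0) := by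
          apply mul_nonneg hη0; split <;> norm_num
        linarith
      · rw [if_neg (not_le.mpr h)]
        have h2 : g (⟪w, x⟫ - γ) + b ≤ 0 := by
          have := hgmono (show ⟪w, x⟫ - γ ≤ ⟪w, x⟫ + γ by linarith)
          linarith
        rw [if_pos h2]
        linarith

end risks
section realize

lemma norm_eq_one_of_sq {w : EuclideanSpace ℝ (Fin d)} (h : ‖w‖ ^ 2 = 1) : ‖w‖ = 1 := by
  have h0 : (0:ℝ) ≤ ‖w‖ := norm_nonneg w
  nlinarith [sq_nonneg (‖w‖ - 1), sq_nonneg (‖w‖ + 1)]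

lemma realize_extreme (hd : 0 < d) (x : EuclideanSpace ℝ (Fin d)) (s : ℝ) (hs : s = 1 ∨ s = -1) :
    ∃ w : EuclideanSpace ℝ (Fin d), ‖w‖ = 1 ∧ ⟪w, x⟫ = s * ‖x‖ := by
  rcases eq_or_ne x 0 with rfl | hx
  · exact ⟨EuclideanSpace.single (⟨0, hd⟩ : Fin d) (1:ℝ), unit_single hd, by simp⟩
  · have hn : (0:ℝ) < ‖x‖ := norm_pos_iff.mpr hx
    refine ⟨(s * ‖x‖⁻¹) • x, ?_, ?_⟩
    · rw [norm_smul]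
      have habs : |s| = 1 := by rcases hs with rfl | rfl <;> norm_num
      rw [Real.norm_eq_abs, abs_mul, habs, one_mul, abs_of_pos (inv_pos.mpr hn),
        inv_mul_cancel₀ hn.ne']
    · rw [real_inner_smul_left, real_inner_self_eq_norm_sq]
      field_simp

lemma realize_mid (hd : 2 ≤ d) (t u : ℝ) (ht : 0 ≤ t) (hu : |u| ≤ t) :
    ∃ w : EuclideanSpace ℝ (Fin d),
      ‖w‖ = 1 ∧ ⟪w, t • EuclideanSpace.single (⟨0, by omega⟩ : Fin d) (1:ℝ)⟫ = u := by
  set i0 : Fin d := ⟨0, by omega⟩ with hi0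
  set i1 : Fin d := ⟨1, by omega⟩ with hi1
  have hne : i1 ≠ i0 := by simp [hi0, hi1, Fin.ext_iff]
  set e0 : EuclideanSpace ℝ (Fin d) := EuclideanSpace.single i0 (1:ℝ) with he0
  set e1 : EuclideanSpace ℝ (Fin d) := EuclideanSpace.single i1 (1:ℝ) with he1
  have he00 : ⟪e0, e0⟫ = 1 := by
    simp [he0, EuclideanSpace.inner_single_left, EuclideanSpace.single_apply]
  have he11 : ⟪e1, e1⟫ = 1 := by
    simp [he1, EuclideanSpace.inner_single_left, EuclideanSpace.single_apply]
  have he01 : ⟪e0, e1⟫ = 0 := by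
    simp [he0, he1, EuclideanSpace.inner_single_left, EuclideanSpace.single_apply, hne]
  have he10 : ⟪e1, e0⟫ = 0 := by
    have hne' : i0 ≠ i1 := fun h => hne h.symm
    simp [he0, he1, EuclideanSpace.inner_single_left, EuclideanSpace.single_apply, hne']
  rcases eq_or_lt_of_le ht with rfl | htpos
  · have hu0 : u = 0 := by
      have := abs_nonneg u
      have : |u| = 0 := le_antisymm hu this
      exact abs_eq_zero.mp this
    refine ⟨e0, by simp [he0, EuclideanSpace.norm_single], ?_⟩
    simp [hu0]
  · set a : ℝ := u / t with hadef
    have ha : |a| ≤ 1 := by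
      rw [hadef, abs_div, abs_of_pos htpos, div_le_one htpos]
      exact hu
    have ha2 : a ^ 2 ≤ 1 := by nlinarith [sq_abs a, abs_nonneg a]
    set s : ℝ := Real.sqrt (1 - a ^ 2) with hsdef
    have hs2 : s ^ 2 = 1 - a ^ 2 := Real.sq_sqrt (by linarith)
    refine ⟨a • e0 + s • e1, ?_, ?_⟩
    · apply norm_eq_one_of_sq
      rw [← real_inner_self_eq_norm_sq]
      rw [inner_add_left, inner_add_right, inner_add_right, real_inner_smul_left,
        real_inner_smul_left, real_inner_smul_left, real_inner_smul_left,
        real_inner_smul_right, real_inner_smul_right, real_inner_smul_right,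
        real_inner_smul_right, he00, he01, he10, he11]
      nlinarith [hs2]
    · rw [real_inner_smul_right, inner_add_left, real_inner_smul_left, real_inner_smul_left,
        he00, he10]
      rw [hadef]
      field_simp
      ring

end realize

section attain

lemma abar_attained {g : ℝ → ℝ} (hgcont : Continuous g) (γ t : ℝ) (ht : 0 ≤ t) :
    ∃ u ∈ Set.Icc (-t) t, Abar g γ t = g u - g (u - γ) ∧
      ∀ v ∈ Set.Icc (-t) t, g v - g (v - γ) ≤ g u - g (u - γ) := by
  have hne : (Set.Icc (-t) t).Nonempty := Set.nonempty_Icc.mpr (by linarith)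
  have hcont : ContinuousOn (fun s => g s - g (s - γ)) (Set.Icc (-t) t) :=
    (hgcont.sub (hgcont.comp (continuous_id.sub continuous_const))).continuousOn
  obtain ⟨u, hu, hmax⟩ := isCompact_Icc.exists_isMaxOn hne hcont
  refine ⟨u, hu, ?_, fun v hv => hmax hv⟩
  apply IsGreatest.csSup_eq
  exact ⟨⟨u, hu, rfl⟩, by rintro v ⟨z, hz, rfl⟩; exact hmax hz⟩

lemma alow_attained {g : ℝ → ℝ} (hgcont : Continuous g) (γ t : ℝ) (ht : 0 ≤ t) :
    ∃ u ∈ Set.Icc (-t) t, Alow g γ t = g u - g (u + γ) ∧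
      ∀ v ∈ Set.Icc (-t) t, g u - g (u + γ) ≤ g v - g (v + γ) := by
  have hne : (Set.Icc (-t) t).Nonempty := Set.nonempty_Icc.mpr (by linarith)
  have hcont : ContinuousOn (fun s => g s - g (s + γ)) (Set.Icc (-t) t) :=
    (hgcont.sub (hgcont.comp (continuous_id.add continuous_const))).continuousOn
  obtain ⟨u, hu, hmin⟩ := isCompact_Icc.exists_isMinOn hne hcont
  refine ⟨u, hu, ?_, fun v hv => hmin hv⟩
  apply IsLeast.csInf_eq
  exact ⟨⟨u, hu, rfl⟩, by rintro v ⟨z, hz, rfl⟩; exact hmin hz⟩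

end attain

set_option linter.unusedSectionVars false
set_option linter.unusedVariables false
set_option maxHeartbeats 1000000

section psi
variable {φ : ℝ → ℝ}

lemma psi_anti (hanti : Antitone φ)
    (hqce : QuasiconcaveOn ℝ Set.univ (fun t => φ t + φ (-t))) :
    ∀ a b : ℝ, 0 ≤ a → a ≤ b → φ b + φ (-b) ≤ φ a + φ (-a) := by
  intro a b ha hab
  have hmem : a ∈ segment ℝ (-b) b := by
    rw [segment_eq_Icc (by linarith : (-b) ≤ b)]
    constructor <;> linarith
  have hconv := hqce (φ b + φ (-b))
  have hb : b ∈ {x ∈ Set.univ | φ b + φ (-b) ≤ φ x + φ (-x)} := by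
    simp
  have hnb : (-b) ∈ {x ∈ Set.univ | φ b + φ (-b) ≤ φ x + φ (-x)} := by
    simp [neg_neg]; linarith
  have := hconv.segment_subset hnb hb hmem
  simpa using this.2

lemma phi_const_of_eq (hanti : Antitone φ) {a b : ℝ} (hab : a ≤ b) (h : φ a = φ b) :
    ∀ v, a ≤ v → v ≤ b → φ v = φ b :=
  fun v hav hvb => le_antisymm (h ▸ hanti hav) (hanti hvb)

end psi

section core
variable {φ : ℝ → ℝ} {c R Ab Al : ℝ}
  (hanti : Antitone φ)
  (hψa : ∀ a b : ℝ, 0 ≤ a → a ≤ b → φ b + φ (-b) ≤ φ a + φ (-a))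
  (hc : 0 < c) (hcR : c ≤ R)
  (hiiA : φ c + φ (-c) < φ Ab + φ (-Ab))
  (hiiL : φ c + φ (-c) < φ Al + φ (-Al))
  (hAb0 : 0 ≤ Ab) (hAl0 : Al ≤ 0) (hAlc : -c < Al)

include hψa hc hiiA hAb0 in
lemma abar_lt_c : Ab < c := by
  by_contra h
  push_neg at h
  exact absurd (hψa c Ab hc.le h) (by linarith)

include hψa hc hiiL hAl0 in
lemma neg_alow_lt_c : -Al < c := by
  by_contra h
  push_neg at h
  have : φ (-Al) + φ (- -Al) ≤ φ c + φ (-c) := hψa c (-Al) hc.le h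
  rw [neg_neg] at this
  linarith

include hanti hψa hc hiiA hiiL hAb0 hAl0 hAlc in
/-- L1a: for all v ≥ Al, φ c < φ (-v). -/
lemma L1a : ∀ v : ℝ, Al ≤ v → φ c < φ (-v) := by
  intro v hv
  have hAbc : Ab < c := abar_lt_c hψa hc hiiA hAb0
  have hvc : -v < c := by linarith
  have hle : φ c ≤ φ (-v) := hanti hvc.le
  rcases lt_or_eq_of_le hle with h | h
  · exact h
  -- φ (-v) = φ c, so φ is constant on [-v, c]
  exfalso
  have hconst : ∀ z, -v ≤ z → z ≤ c → φ z = φ c := by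
    intro z h1 h2
    exact le_antisymm (h ▸ hanti h1) (hanti h2)
  rcases le_or_gt v 0 with hv0 | hv0
  · -- v ≤ 0 : use Al;  -v ≥ 0, -Al ∈ [-v, c]
    have h1 : φ (-Al) = φ c := hconst (-Al) (by linarith) (by linarith [neg_alow_lt_c hψa hc hiiL hAl0])
    have h2 : φ Al ≤ φ (-c) := hanti (by linarith)
    linarith
  · -- v > 0 : use Ab; Ab ∈ [-v, c]
    have h1 : φ Ab = φ c := hconst Ab (by linarith) hAbc.le
    have h2 : φ (-Ab) ≤ φ (-c) := hanti (by linarith)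
    linarith

include hanti hψa hc hcR hiiA hAb0 in
/-- L2a: for all v ≤ Ab, φ R < φ v. -/
lemma L2a : ∀ v : ℝ, v ≤ Ab → φ R < φ v := by
  intro v hv
  have hAbc : Ab < c := abar_lt_c hψa hc hiiA hAb0
  have hle : φ R ≤ φ Ab := hanti (by linarith)
  have hle2 : φ Ab ≤ φ v := hanti hv
  rcases lt_or_eq_of_le hle with h | h
  · linarith
  exfalso
  have hconst : ∀ z, Ab ≤ z → z ≤ R → φ z = φ Ab := by
    intro z h1 h2
    exact le_antisymm (hanti h1) (h ▸ hanti h2)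
  have h1 : φ c = φ Ab := hconst c hAbc.le hcR
  have h2 : φ (-Ab) ≤ φ (-c) := hanti (by linarith)
  linarith

include hψa hc hcR in
/-- L1b/psi lower bound on [-c,R], assuming (i). -/
lemma psi_ge (hiR : φ c + φ (-c) = φ R + φ (-R)) :
    ∀ v : ℝ, -c ≤ v → v ≤ R → φ c + φ (-c) ≤ φ v + φ (-v) := by
  intro v h1 h2
  rcases le_or_gt 0 v with hv0 | hv0
  · rcases le_or_gt v c with hvc | hvc
    · exact hψa v c hv0 hvc
    · have := hψa v R hv0 h2
      linarith
  · have h3 : -v ≤ c := by linarith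
    have := hψa (-v) c (by linarith) h3
    simp only [neg_neg] at this
    linarith

include hψa hc hiiA hiiL hAb0 hAl0 in
/-- L3: strict psi bound on [Al, Ab]. -/
lemma L3 : ∀ v : ℝ, Al ≤ v → v ≤ Ab → φ c + φ (-c) < φ v + φ (-v) := by
  intro v h1 h2
  rcases le_or_gt 0 v with hv0 | hv0
  · have := hψa v Ab hv0 h2
    linarith
  · have := hψa (-v) (-Al) (by linarith) (by linarith)
    simp only [neg_neg] at this
    linarith

end core
lemma bk_lt (d : ℕ) (hd : 2 ≤ d) (γ : ℝ) (hγ0 : 0 < γ) (hγ1 : γ < 1)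
    (g : ℝ → ℝ) (hgmono : Monotone g) (hgcont : Continuous g)
    (G : ℝ) (hG : 0 ≤ G) (hg1 : g (1 + γ) < G) (hg2 : -G < g (-1 - γ))
    (φ : ℝ → ℝ) (hφ0 : ∀ t, 0 ≤ φ t) (hbdd : ∃ M, ∀ t, φ t ≤ M)
    (hcont : Continuous φ) (hanti : Antitone φ)
    (hqce : QuasiconcaveOn ℝ Set.univ (fun t => φ t + φ (-t)))
    (hstrict : ∀ t ∈ Set.Icc (0:ℝ) 1, φ (G - g (-t)) < φ (g (-t) - G))
    (hgsum : ∀ t ∈ Set.Icc (0:ℝ) 1, 0 ≤ g (-t) + g t)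
    (hcond : ∀ t ∈ Set.Icc (0:ℝ) 1,
        φ (G - g (-t)) + φ (g (-t) - G) = φ (g t + G) + φ (-(g t) - G) ∧
        φ (G - g (-t)) + φ (g (-t) - G) <
          min (φ (Abar g γ t) + φ (-(Abar g γ t)))
              (φ (Alow g γ t) + φ (-(Alow g γ t))))
    (ε : ℝ) (hε : ε > 0) (η : ℝ) (hη0 : 0 ≤ η) (hη1 : η ≤ 1) (hηc : η < 1/2)
    (x : EuclideanSpace ℝ (Fin d)) (hx : ‖x‖ ≤ 1) :
    ∃ δ > (0:ℝ), ∀ f ∈ Hg d g G,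
      innerRisk (marginLoss φ) f x η < minInnerRisk (marginLoss φ) (Hg d g G) x η + δ →
      innerRisk (advLoss γ) f x η < minInnerRisk (advLoss γ) (Hg d g G) x η + ε := by
  have hd0 : 0 < d := by omega
  have hψa : ∀ a b : ℝ, 0 ≤ a → a ≤ b → φ b + φ (-b) ≤ φ a + φ (-a) := psi_anti hanti hqce
  have hglt : ∀ z : ℝ, z ≤ 1 + γ → g z < G := fun z hz => lt_of_le_of_lt (hgmono hz) hg1
  have hggt : ∀ z : ℝ, -1 - γ ≤ z → -G < g z := fun z hz => lt_of_lt_of_le hg2 (hgmono hz)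
  set r : ℝ := ‖x‖ with hrdef
  have hr0 : 0 ≤ r := norm_nonneg x
  have hr1 : r ≤ 1 := hx
  obtain ⟨hieq, hilt⟩ := hcond r ⟨hr0, hr1⟩
  set c : ℝ := G - g (-r) with hcdef
  set R : ℝ := g r + G with hRdef
  have e1 : g (-r) - G = -c := by rw [hcdef]; ring
  have e2 : -(g r) - G = -R := by rw [hRdef]; ring
  rw [e1, e2] at hieq
  rw [e1] at hilt
  have hiR : φ c + φ (-c) = φ R + φ (-R) := hieq
  have hc : 0 < c := by
    by_contra hcn
    push_neg at hcn
    have h1 := hstrict r ⟨hr0, hr1⟩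
    rw [e1] at h1
    exact absurd (hanti (by linarith : c ≤ -c)) (not_le.mpr h1)
  have hcR : c ≤ R := by
    have := hgsum r ⟨hr0, hr1⟩
    rw [hcdef, hRdef]; linarith
  -- Abar / Alow facts
  obtain ⟨ub, hubmem, hAbeq, hAbmax⟩ := abar_attained hgcont γ r hr0
  obtain ⟨ul, hulmem, hAleq, hAlmin⟩ := alow_attained hgcont γ r hr0
  set Ab : ℝ := Abar g γ r with hAbdef
  set Al : ℝ := Alow g γ r with hAldef
  have hAb0 : 0 ≤ Ab := by
    rw [hAbeq]; have := hgmono (show ub - γ ≤ ub by linarith); linarith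
  have hAl0 : Al ≤ 0 := by
    rw [hAleq]; have := hgmono (show ul ≤ ul + γ by linarith); linarith
  have hAlc : -c < Al := by
    rw [hAleq, hcdef]
    have h1 : g (-r) ≤ g ul := hgmono hulmem.1
    have h2 : g (ul + γ) < G := hglt _ (by have := hulmem.2; linarith)
    linarith
  have hiiA : φ c + φ (-c) < φ Ab + φ (-Ab) := (lt_min_iff.mp hilt).1
  have hiiL : φ c + φ (-c) < φ Al + φ (-Al) := (lt_min_iff.mp hilt).2
  clear_value c R Ab Al
  -- adversarial min risk
  have hmin2 : minInnerRisk (advLoss γ) (Hg d g G) x η = min η (1 - η) :=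
    minInnerRisk_adv hγ0 hgmono hG hg1 hg2 hd0 hx ⟨hη0, hη1⟩
  -- generic bounds for members of Hg
  have hval_mem : ∀ w : EuclideanSpace ℝ (Fin d), ‖w‖ = 1 → ∀ b : ℝ, |b| ≤ G →
      -c ≤ g ⟪w, x⟫ + b ∧ g ⟪w, x⟫ + b ≤ R := by
    intro w hw b hb
    have hu := abs_le.mp (abs_inner_le hw (x := x))
    obtain ⟨hb1, hb2⟩ := abs_le.mp hb
    have h1 : g (-r) ≤ g ⟪w, x⟫ := hgmono hu.1
    have h2 : g ⟪w, x⟫ ≤ g r := hgmono hu.2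
    constructor
    · rw [hcdef]; linarith
    · rw [hRdef]; linarith
  have hM : minInnerRisk (marginLoss φ) (Hg d g G) x η = η * φ (-c) + (1 - η) * φ c := by
    apply minInnerRisk_eq
    · obtain ⟨w, hw, hwx⟩ := realize_extreme hd0 x (-1) (Or.inr rfl)
      refine ⟨_, mem_Hg hw (by rw [abs_neg, abs_of_nonneg hG] : |(-G)| ≤ G), ?_⟩
      rw [innerRisk_margin]
      have hv : g ⟪w, x⟫ + -G = -c := by rw [hwx, hcdef, ← hrdef]; ring_nf
      rw [hv, neg_neg]
    · rintro f ⟨w, b, hw, hb, rfl⟩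
      rw [innerRisk_margin]
      obtain ⟨hv1, hv2⟩ := hval_mem w hw b hb
      set v := g ⟪w, x⟫ + b
      have hψv : φ c + φ (-c) ≤ φ v + φ (-v) := psi_ge hψa hc hcR hiR v hv1 hv2
      have hφv : φ c ≤ φ (-v) := hanti (by linarith)
      linarith [mul_nonneg hη0 (sub_nonneg.mpr hψv),
        mul_nonneg (by linarith : (0:ℝ) ≤ 1 - 2*η) (sub_nonneg.mpr hφv)]
  -- minimize over compact bad set
  set T : Set (ℝ × ℝ) :=
    (Set.Icc (-r) r ×ˢ Set.Icc (-G) G) ∩ {p : ℝ × ℝ | 0 ≤ g (p.1 + γ) + p.2} with hTdef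
  have hTc : IsCompact T := by
    apply (isCompact_Icc.prod isCompact_Icc).inter_right
    exact isClosed_le continuous_const
      ((hgcont.comp (continuous_fst.add continuous_const)).add continuous_snd)
  have hTne : T.Nonempty := by
    refine ⟨(r, G), ⟨⟨⟨by linarith, le_refl r⟩, ⟨by linarith, le_refl G⟩⟩, ?_⟩⟩
    have := hggt (r + γ) (by linarith)
    simp only [Set.mem_setOf_eq]
    linarith
  have hFcont : Continuous fun p : ℝ × ℝ => η * φ (g p.1 + p.2) + (1-η) * φ (-(g p.1 + p.2)) := by
    have h1 : Continuous fun p : ℝ × ℝ => g p.1 + p.2 :=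
      (hgcont.comp continuous_fst).add continuous_snd
    exact ((continuous_const.mul (hcont.comp h1)).add
      (continuous_const.mul (hcont.comp h1.neg)))
  obtain ⟨p₀, hp₀T, hp₀min⟩ := hTc.exists_isMinOn hTne hFcont.continuousOn
  set v₀ : ℝ := g p₀.1 + p₀.2 with hv₀def
  have hp₀mem := hp₀T.1
  have hp₀bad : 0 ≤ g (p₀.1 + γ) + p₀.2 := hp₀T.2
  have hv₀Al : Al ≤ v₀ := by
    have := hAlmin p₀.1 ⟨hp₀mem.1.1, hp₀mem.1.2⟩
    rw [← hAleq] at this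
    rw [hv₀def]; linarith
  have hv₀R : v₀ ≤ R := by
    have hgp1 : g p₀.1 ≤ g r := hgmono hp₀mem.1.2
    have hb2 := hp₀mem.2.2
    rw [hv₀def, hRdef]; linarith
  have hstrict₀ : η * φ (-c) + (1 - η) * φ c < η * φ v₀ + (1-η) * φ (-v₀) := by
    have hψv := psi_ge hψa hc hcR hiR v₀ (by linarith) hv₀R
    have hφv : φ c < φ (-v₀) := L1a hanti hψa hc hiiA hiiL hAb0 hAl0 hAlc v₀ hv₀Al
    linarith [mul_nonneg hη0 (sub_nonneg.mpr hψv),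
      mul_pos (by linarith : (0:ℝ) < 1 - 2*η) (sub_pos.mpr hφv)]
  refine ⟨(η * φ v₀ + (1-η) * φ (-v₀)) - (η * φ (-c) + (1 - η) * φ c), by linarith, ?_⟩
  rintro f ⟨w, b, hw, hb, rfl⟩ h1
  rw [innerRisk_margin, hM] at h1
  have hu := abs_le.mp (abs_inner_le hw (x := x))
  have hgood : g (⟪w, x⟫ + γ) + b < 0 := by
    by_contra hbad
    push_neg at hbad
    have hpT : (⟪w, x⟫, b) ∈ T := ⟨⟨⟨hu.1, hu.2⟩, abs_le.mp hb⟩, hbad⟩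
    have h2 : η * φ (g p₀.1 + p₀.2) + (1-η) * φ (-(g p₀.1 + p₀.2)) ≤
        η * φ (g ⟪w, x⟫ + b) + (1-η) * φ (-(g ⟪w, x⟫ + b)) := hp₀min hpT
    rw [← hv₀def] at h2
    linarith
  rw [innerRisk_adv hγ0 hgmono hw, hmin2]
  have hc1 : g (⟪w, x⟫ - γ) + b ≤ 0 := by
    have := hgmono (show ⟪w, x⟫ - γ ≤ ⟪w, x⟫ + γ by linarith)
    linarith
  rw [if_pos hc1, if_neg (not_le.mpr hgood), min_eq_left (by linarith : η ≤ 1 - η)]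
  linarith


lemma bk_eq (d : ℕ) (hd : 2 ≤ d) (γ : ℝ) (hγ0 : 0 < γ) (hγ1 : γ < 1)
    (g : ℝ → ℝ) (hgmono : Monotone g) (hgcont : Continuous g)
    (G : ℝ) (hG : 0 ≤ G) (hg1 : g (1 + γ) < G) (hg2 : -G < g (-1 - γ))
    (φ : ℝ → ℝ) (hφ0 : ∀ t, 0 ≤ φ t) (hbdd : ∃ M, ∀ t, φ t ≤ M)
    (hcont : Continuous φ) (hanti : Antitone φ)
    (hqce : QuasiconcaveOn ℝ Set.univ (fun t => φ t + φ (-t)))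
    (hstrict : ∀ t ∈ Set.Icc (0:ℝ) 1, φ (G - g (-t)) < φ (g (-t) - G))
    (hgsum : ∀ t ∈ Set.Icc (0:ℝ) 1, 0 ≤ g (-t) + g t)
    (hcond : ∀ t ∈ Set.Icc (0:ℝ) 1,
        φ (G - g (-t)) + φ (g (-t) - G) = φ (g t + G) + φ (-(g t) - G) ∧
        φ (G - g (-t)) + φ (g (-t) - G) <
          min (φ (Abar g γ t) + φ (-(Abar g γ t)))
              (φ (Alow g γ t) + φ (-(Alow g γ t))))
    (ε : ℝ) (hε : ε > 0) (η : ℝ) (hη0 : 0 ≤ η) (hη1 : η ≤ 1) (hηc : η = 1/2)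
    (x : EuclideanSpace ℝ (Fin d)) (hx : ‖x‖ ≤ 1) :
    ∃ δ > (0:ℝ), ∀ f ∈ Hg d g G,
      innerRisk (marginLoss φ) f x η < minInnerRisk (marginLoss φ) (Hg d g G) x η + δ →
      innerRisk (advLoss γ) f x η < minInnerRisk (advLoss γ) (Hg d g G) x η + ε := by
  have hd0 : 0 < d := by omega
  have hψa : ∀ a b : ℝ, 0 ≤ a → a ≤ b → φ b + φ (-b) ≤ φ a + φ (-a) := psi_anti hanti hqce
  have hglt : ∀ z : ℝ, z ≤ 1 + γ → g z < G := fun z hz => lt_of_le_of_lt (hgmono hz) hg1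
  have hggt : ∀ z : ℝ, -1 - γ ≤ z → -G < g z := fun z hz => lt_of_lt_of_le hg2 (hgmono hz)
  set r : ℝ := ‖x‖ with hrdef
  have hr0 : 0 ≤ r := norm_nonneg x
  have hr1 : r ≤ 1 := hx
  obtain ⟨hieq, hilt⟩ := hcond r ⟨hr0, hr1⟩
  set c : ℝ := G - g (-r) with hcdef
  set R : ℝ := g r + G with hRdef
  have e1 : g (-r) - G = -c := by rw [hcdef]; ring
  have e2 : -(g r) - G = -R := by rw [hRdef]; ring
  rw [e1, e2] at hieq
  rw [e1] at hilt
  have hiR : φ c + φ (-c) = φ R + φ (-R) := hieq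
  have hc : 0 < c := by
    by_contra hcn
    push_neg at hcn
    have h1 := hstrict r ⟨hr0, hr1⟩
    rw [e1] at h1
    exact absurd (hanti (by linarith : c ≤ -c)) (not_le.mpr h1)
  have hcR : c ≤ R := by
    have := hgsum r ⟨hr0, hr1⟩
    rw [hcdef, hRdef]; linarith
  -- Abar / Alow facts
  obtain ⟨ub, hubmem, hAbeq, hAbmax⟩ := abar_attained hgcont γ r hr0
  obtain ⟨ul, hulmem, hAleq, hAlmin⟩ := alow_attained hgcont γ r hr0
  set Ab : ℝ := Abar g γ r with hAbdef
  set Al : ℝ := Alow g γ r with hAldef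
  have hAb0 : 0 ≤ Ab := by
    rw [hAbeq]; have := hgmono (show ub - γ ≤ ub by linarith); linarith
  have hAl0 : Al ≤ 0 := by
    rw [hAleq]; have := hgmono (show ul ≤ ul + γ by linarith); linarith
  have hAlc : -c < Al := by
    rw [hAleq, hcdef]
    have h1 : g (-r) ≤ g ul := hgmono hulmem.1
    have h2 : g (ul + γ) < G := hglt _ (by have := hulmem.2; linarith)
    linarith
  have hiiA : φ c + φ (-c) < φ Ab + φ (-Ab) := (lt_min_iff.mp hilt).1
  have hiiL : φ c + φ (-c) < φ Al + φ (-Al) := (lt_min_iff.mp hilt).2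
  clear_value c R Ab Al
  -- adversarial min risk
  have hmin2 : minInnerRisk (advLoss γ) (Hg d g G) x η = min η (1 - η) :=
    minInnerRisk_adv hγ0 hgmono hG hg1 hg2 hd0 hx ⟨hη0, hη1⟩
  -- generic bounds for members of Hg
  have hval_mem : ∀ w : EuclideanSpace ℝ (Fin d), ‖w‖ = 1 → ∀ b : ℝ, |b| ≤ G →
      -c ≤ g ⟪w, x⟫ + b ∧ g ⟪w, x⟫ + b ≤ R := by
    intro w hw b hb
    have hu := abs_le.mp (abs_inner_le hw (x := x))
    obtain ⟨hb1, hb2⟩ := abs_le.mp hb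
    have h1 : g (-r) ≤ g ⟪w, x⟫ := hgmono hu.1
    have h2 : g ⟪w, x⟫ ≤ g r := hgmono hu.2
    constructor
    · rw [hcdef]; linarith
    · rw [hRdef]; linarith
  have hM : minInnerRisk (marginLoss φ) (Hg d g G) x η = η * φ (-c) + (1 - η) * φ c := by
    apply minInnerRisk_eq
    · obtain ⟨w, hw, hwx⟩ := realize_extreme hd0 x (-1) (Or.inr rfl)
      refine ⟨_, mem_Hg hw (by rw [abs_neg, abs_of_nonneg hG] : |(-G)| ≤ G), ?_⟩
      rw [innerRisk_margin]
      have hv : g ⟪w, x⟫ + -G = -c := by rw [hwx, hcdef, ← hrdef]; ring_nf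
      rw [hv, neg_neg]
    · rintro f ⟨w, b, hw, hb, rfl⟩
      rw [innerRisk_margin]
      obtain ⟨hv1, hv2⟩ := hval_mem w hw b hb
      set v := g ⟪w, x⟫ + b
      have hψv : φ c + φ (-c) ≤ φ v + φ (-v) := psi_ge hψa hc hcR hiR v hv1 hv2
      have hφv : φ c ≤ φ (-v) := hanti (by linarith)
      linarith [mul_nonneg hη0 (sub_nonneg.mpr hψv),
        mul_nonneg (by linarith : (0:ℝ) ≤ 1 - 2*η) (sub_nonneg.mpr hφv)]
  set T : Set (ℝ × ℝ) :=
    (Set.Icc (-r) r ×ˢ Set.Icc (-G) G) ∩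
      {p : ℝ × ℝ | 0 ≤ g (p.1 + γ) + p.2 ∧ g (p.1 - γ) + p.2 ≤ 0} with hTdef
  have hTc : IsCompact T := by
    apply (isCompact_Icc.prod isCompact_Icc).inter_right
    exact (isClosed_le continuous_const
      ((hgcont.comp (continuous_fst.add continuous_const)).add continuous_snd)).inter
      (isClosed_le
        ((hgcont.comp (continuous_fst.sub continuous_const)).add continuous_snd)
        continuous_const)
  have hTne : T.Nonempty := by
    have h1 : g (ul + γ) < G := hglt _ (by have := hulmem.2; linarith)
    have h2 : -G < g (ul + γ) := hggt _ (by have := hulmem.1; linarith)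
    have h3 : g (ul - γ) ≤ g (ul + γ) := hgmono (by linarith)
    refine ⟨(ul, -g (ul + γ)),
      ⟨⟨hulmem, ⟨show -G ≤ -g (ul + γ) by linarith, show -g (ul + γ) ≤ G by linarith⟩⟩,
        show (0:ℝ) ≤ g (ul + γ) + -g (ul + γ) by linarith,
        show g (ul - γ) + -g (ul + γ) ≤ 0 by linarith⟩⟩
  have hFcont : Continuous fun p : ℝ × ℝ => η * φ (g p.1 + p.2) + (1-η) * φ (-(g p.1 + p.2)) := by
    have h1 : Continuous fun p : ℝ × ℝ => g p.1 + p.2 :=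
      (hgcont.comp continuous_fst).add continuous_snd
    exact ((continuous_const.mul (hcont.comp h1)).add
      (continuous_const.mul (hcont.comp h1.neg)))
  obtain ⟨p₀, hp₀T, hp₀min⟩ := hTc.exists_isMinOn hTne hFcont.continuousOn
  set v₀ : ℝ := g p₀.1 + p₀.2 with hv₀def
  have hp₀mem := hp₀T.1
  have hp₀bad1 : 0 ≤ g (p₀.1 + γ) + p₀.2 := hp₀T.2.1
  have hp₀bad2 : g (p₀.1 - γ) + p₀.2 ≤ 0 := hp₀T.2.2
  have hv₀Al : Al ≤ v₀ := by
    have := hAlmin p₀.1 ⟨hp₀mem.1.1, hp₀mem.1.2⟩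
    rw [← hAleq] at this
    rw [hv₀def]; linarith
  have hv₀Ab : v₀ ≤ Ab := by
    have := hAbmax p₀.1 ⟨hp₀mem.1.1, hp₀mem.1.2⟩
    rw [← hAbeq] at this
    rw [hv₀def]; linarith
  have hstrict₀ : η * φ (-c) + (1 - η) * φ c < η * φ v₀ + (1-η) * φ (-v₀) := by
    have hψv := L3 hψa hc hiiA hiiL hAb0 hAl0 v₀ hv₀Al hv₀Ab
    rw [hηc]; rw [hηc] at *
    linarith
  refine ⟨(η * φ v₀ + (1-η) * φ (-v₀)) - (η * φ (-c) + (1 - η) * φ c), by linarith, ?_⟩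
  rintro f ⟨w, b, hw, hb, rfl⟩ h1
  rw [innerRisk_margin, hM] at h1
  have hu := abs_le.mp (abs_inner_le hw (x := x))
  have hgood : ¬ (0 ≤ g (⟪w, x⟫ + γ) + b ∧ g (⟪w, x⟫ - γ) + b ≤ 0) := by
    intro hbad
    have hpT : (⟪w, x⟫, b) ∈ T := ⟨⟨⟨hu.1, hu.2⟩, abs_le.mp hb⟩, hbad.1, hbad.2⟩
    have h2 : η * φ (g p₀.1 + p₀.2) + (1-η) * φ (-(g p₀.1 + p₀.2)) ≤
        η * φ (g ⟪w, x⟫ + b) + (1-η) * φ (-(g ⟪w, x⟫ + b)) := hp₀min hpT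
    rw [← hv₀def] at h2
    linarith
  rw [innerRisk_adv hγ0 hgmono hw, hmin2]
  have hmineq : min η (1 - η) = 1/2 := by rw [hηc]; norm_num
  rw [hmineq]
  rcases le_or_gt (g (⟪w, x⟫ - γ) + b) 0 with hA | hA
  · rcases le_or_gt 0 (g (⟪w, x⟫ + γ) + b) with hC | hC
    · exact absurd ⟨hC, hA⟩ hgood
    · rw [if_pos hA, if_neg (not_le.mpr hC), hηc]
      norm_num
      linarith
  · rw [if_neg (not_le.mpr hA)]
    have hC : 0 ≤ g (⟪w, x⟫ + γ) + b := by
      have := hgmono (show ⟪w, x⟫ - γ ≤ ⟪w, x⟫ + γ by linarith)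
      linarith
    rw [if_pos hC, hηc]
    norm_num
    linarith


lemma bk_gt (d : ℕ) (hd : 2 ≤ d) (γ : ℝ) (hγ0 : 0 < γ) (hγ1 : γ < 1)
    (g : ℝ → ℝ) (hgmono : Monotone g) (hgcont : Continuous g)
    (G : ℝ) (hG : 0 ≤ G) (hg1 : g (1 + γ) < G) (hg2 : -G < g (-1 - γ))
    (φ : ℝ → ℝ) (hφ0 : ∀ t, 0 ≤ φ t) (hbdd : ∃ M, ∀ t, φ t ≤ M)
    (hcont : Continuous φ) (hanti : Antitone φ)
    (hqce : QuasiconcaveOn ℝ Set.univ (fun t => φ t + φ (-t)))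
    (hstrict : ∀ t ∈ Set.Icc (0:ℝ) 1, φ (G - g (-t)) < φ (g (-t) - G))
    (hgsum : ∀ t ∈ Set.Icc (0:ℝ) 1, 0 ≤ g (-t) + g t)
    (hcond : ∀ t ∈ Set.Icc (0:ℝ) 1,
        φ (G - g (-t)) + φ (g (-t) - G) = φ (g t + G) + φ (-(g t) - G) ∧
        φ (G - g (-t)) + φ (g (-t) - G) <
          min (φ (Abar g γ t) + φ (-(Abar g γ t)))
              (φ (Alow g γ t) + φ (-(Alow g γ t))))
    (ε : ℝ) (hε : ε > 0) (η : ℝ) (hη0 : 0 ≤ η) (hη1 : η ≤ 1) (hηc : 1/2 < η)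
    (x : EuclideanSpace ℝ (Fin d)) (hx : ‖x‖ ≤ 1) :
    ∃ δ > (0:ℝ), ∀ f ∈ Hg d g G,
      innerRisk (marginLoss φ) f x η < minInnerRisk (marginLoss φ) (Hg d g G) x η + δ →
      innerRisk (advLoss γ) f x η < minInnerRisk (advLoss γ) (Hg d g G) x η + ε := by
  have hd0 : 0 < d := by omega
  have hψa : ∀ a b : ℝ, 0 ≤ a → a ≤ b → φ b + φ (-b) ≤ φ a + φ (-a) := psi_anti hanti hqce
  have hglt : ∀ z : ℝ, z ≤ 1 + γ → g z < G := fun z hz => lt_of_le_of_lt (hgmono hz) hg1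
  have hggt : ∀ z : ℝ, -1 - γ ≤ z → -G < g z := fun z hz => lt_of_lt_of_le hg2 (hgmono hz)
  set r : ℝ := ‖x‖ with hrdef
  have hr0 : 0 ≤ r := norm_nonneg x
  have hr1 : r ≤ 1 := hx
  obtain ⟨hieq, hilt⟩ := hcond r ⟨hr0, hr1⟩
  set c : ℝ := G - g (-r) with hcdef
  set R : ℝ := g r + G with hRdef
  have e1 : g (-r) - G = -c := by rw [hcdef]; ring
  have e2 : -(g r) - G = -R := by rw [hRdef]; ring
  rw [e1, e2] at hieq
  rw [e1] at hilt
  have hiR : φ c + φ (-c) = φ R + φ (-R) := hieq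
  have hc : 0 < c := by
    by_contra hcn
    push_neg at hcn
    have h1 := hstrict r ⟨hr0, hr1⟩
    rw [e1] at h1
    exact absurd (hanti (by linarith : c ≤ -c)) (not_le.mpr h1)
  have hcR : c ≤ R := by
    have := hgsum r ⟨hr0, hr1⟩
    rw [hcdef, hRdef]; linarith
  -- Abar / Alow facts
  obtain ⟨ub, hubmem, hAbeq, hAbmax⟩ := abar_attained hgcont γ r hr0
  obtain ⟨ul, hulmem, hAleq, hAlmin⟩ := alow_attained hgcont γ r hr0
  set Ab : ℝ := Abar g γ r with hAbdef
  set Al : ℝ := Alow g γ r with hAldef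
  have hAb0 : 0 ≤ Ab := by
    rw [hAbeq]; have := hgmono (show ub - γ ≤ ub by linarith); linarith
  have hAl0 : Al ≤ 0 := by
    rw [hAleq]; have := hgmono (show ul ≤ ul + γ by linarith); linarith
  have hAlc : -c < Al := by
    rw [hAleq, hcdef]
    have h1 : g (-r) ≤ g ul := hgmono hulmem.1
    have h2 : g (ul + γ) < G := hglt _ (by have := hulmem.2; linarith)
    linarith
  have hiiA : φ c + φ (-c) < φ Ab + φ (-Ab) := (lt_min_iff.mp hilt).1
  have hiiL : φ c + φ (-c) < φ Al + φ (-Al) := (lt_min_iff.mp hilt).2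
  clear_value c R Ab Al
  -- adversarial min risk
  have hmin2 : minInnerRisk (advLoss γ) (Hg d g G) x η = min η (1 - η) :=
    minInnerRisk_adv hγ0 hgmono hG hg1 hg2 hd0 hx ⟨hη0, hη1⟩
  -- generic bounds for members of Hg
  have hval_mem : ∀ w : EuclideanSpace ℝ (Fin d), ‖w‖ = 1 → ∀ b : ℝ, |b| ≤ G →
      -c ≤ g ⟪w, x⟫ + b ∧ g ⟪w, x⟫ + b ≤ R := by
    intro w hw b hb
    have hu := abs_le.mp (abs_inner_le hw (x := x))
    obtain ⟨hb1, hb2⟩ := abs_le.mp hb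
    have h1 : g (-r) ≤ g ⟪w, x⟫ := hgmono hu.1
    have h2 : g ⟪w, x⟫ ≤ g r := hgmono hu.2
    constructor
    · rw [hcdef]; linarith
    · rw [hRdef]; linarith
  have hη2 : (0:ℝ) ≤ 2*η - 1 := by linarith
  have hM : minInnerRisk (marginLoss φ) (Hg d g G) x η = η * φ R + (1 - η) * φ (-R) := by
    apply minInnerRisk_eq
    · obtain ⟨w, hw, hwx⟩ := realize_extreme hd0 x 1 (Or.inl rfl)
      refine ⟨_, mem_Hg hw (by rw [abs_of_nonneg hG] : |G| ≤ G), ?_⟩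
      rw [innerRisk_margin]
      have hv : g ⟪w, x⟫ + G = R := by rw [hwx, hRdef, ← hrdef]; ring_nf
      rw [hv]
    · rintro f ⟨w, b, hw, hb, rfl⟩
      rw [innerRisk_margin]
      obtain ⟨hv1, hv2⟩ := hval_mem w hw b hb
      set v := g ⟪w, x⟫ + b
      have hψv : φ R + φ (-R) ≤ φ v + φ (-v) := by
        have := psi_ge hψa hc hcR hiR v hv1 hv2
        linarith [hiR]
      have hφv : φ R ≤ φ v := hanti hv2
      linarith [mul_nonneg (by linarith : (0:ℝ) ≤ 1 - η) (sub_nonneg.mpr hψv),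
        mul_nonneg hη2 (sub_nonneg.mpr hφv)]
  set T : Set (ℝ × ℝ) :=
    (Set.Icc (-r) r ×ˢ Set.Icc (-G) G) ∩ {p : ℝ × ℝ | g (p.1 - γ) + p.2 ≤ 0} with hTdef
  have hTc : IsCompact T := by
    apply (isCompact_Icc.prod isCompact_Icc).inter_right
    exact isClosed_le
      ((hgcont.comp (continuous_fst.sub continuous_const)).add continuous_snd)
      continuous_const
  have hTne : T.Nonempty := by
    have hgl := hglt (-r - γ) (by linarith)
    exact ⟨(-r, -G), ⟨⟨le_refl (-r), show -r ≤ r by linarith⟩,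
      ⟨le_refl (-G), show -G ≤ G by linarith⟩⟩, show g (-r - γ) + -G ≤ 0 by linarith⟩
  have hFcont : Continuous fun p : ℝ × ℝ => η * φ (g p.1 + p.2) + (1-η) * φ (-(g p.1 + p.2)) := by
    have h1 : Continuous fun p : ℝ × ℝ => g p.1 + p.2 :=
      (hgcont.comp continuous_fst).add continuous_snd
    exact ((continuous_const.mul (hcont.comp h1)).add
      (continuous_const.mul (hcont.comp h1.neg)))
  obtain ⟨p₀, hp₀T, hp₀min⟩ := hTc.exists_isMinOn hTne hFcont.continuousOn
  set v₀ : ℝ := g p₀.1 + p₀.2 with hv₀def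
  have hp₀mem := hp₀T.1
  have hp₀bad : g (p₀.1 - γ) + p₀.2 ≤ 0 := hp₀T.2
  have hv₀Ab : v₀ ≤ Ab := by
    have := hAbmax p₀.1 ⟨hp₀mem.1.1, hp₀mem.1.2⟩
    rw [← hAbeq] at this
    rw [hv₀def]; linarith
  have hv₀c : -c ≤ v₀ := by
    have h1 : g (-r) ≤ g p₀.1 := hgmono hp₀mem.1.1
    have h2 := hp₀mem.2.1
    rw [hv₀def, hcdef]; linarith
  have hv₀R : v₀ ≤ R := by
    have h1 : g p₀.1 ≤ g r := hgmono hp₀mem.1.2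
    have h2 := hp₀mem.2.2
    rw [hv₀def, hRdef]; linarith
  have hstrict₀ : η * φ R + (1 - η) * φ (-R) < η * φ v₀ + (1-η) * φ (-v₀) := by
    have hψv : φ R + φ (-R) ≤ φ v₀ + φ (-v₀) := by
      have := psi_ge hψa hc hcR hiR v₀ hv₀c hv₀R
      linarith [hiR]
    have hφv : φ R < φ v₀ := L2a hanti hψa hc hcR hiiA hAb0 v₀ hv₀Ab
    linarith [mul_nonneg (by linarith : (0:ℝ) ≤ 1 - η) (sub_nonneg.mpr hψv),
      mul_pos (by linarith : (0:ℝ) < 2*η - 1) (sub_pos.mpr hφv)]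
  refine ⟨(η * φ v₀ + (1-η) * φ (-v₀)) - (η * φ R + (1 - η) * φ (-R)), by linarith, ?_⟩
  rintro f ⟨w, b, hw, hb, rfl⟩ h1
  rw [innerRisk_margin, hM] at h1
  have hu := abs_le.mp (abs_inner_le hw (x := x))
  have hgood : 0 < g (⟪w, x⟫ - γ) + b := by
    by_contra hbad
    push_neg at hbad
    have hpT : (⟪w, x⟫, b) ∈ T := ⟨⟨⟨hu.1, hu.2⟩, abs_le.mp hb⟩, hbad⟩
    have h2 : η * φ (g p₀.1 + p₀.2) + (1-η) * φ (-(g p₀.1 + p₀.2)) ≤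
        η * φ (g ⟪w, x⟫ + b) + (1-η) * φ (-(g ⟪w, x⟫ + b)) := hp₀min hpT
    rw [← hv₀def] at h2
    linarith
  rw [innerRisk_adv hγ0 hgmono hw, hmin2]
  have hC : 0 ≤ g (⟪w, x⟫ + γ) + b := by
    have := hgmono (show ⟪w, x⟫ - γ ≤ ⟪w, x⟫ + γ by linarith)
    linarith
  rw [if_neg (not_le.mpr hgood), if_pos hC, min_eq_right (by linarith : 1 - η ≤ η)]
  linarith


lemma fd_main (d : ℕ) (hd : 2 ≤ d) (γ : ℝ) (hγ0 : 0 < γ) (hγ1 : γ < 1)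
    (g : ℝ → ℝ) (hgmono : Monotone g) (hgcont : Continuous g)
    (G : ℝ) (hG : 0 ≤ G) (hg1 : g (1 + γ) < G) (hg2 : -G < g (-1 - γ))
    (φ : ℝ → ℝ) (hφ0 : ∀ t, 0 ≤ φ t) (hbdd : ∃ M, ∀ t, φ t ≤ M)
    (hcont : Continuous φ) (hanti : Antitone φ)
    (hqce : QuasiconcaveOn ℝ Set.univ (fun t => φ t + φ (-t)))
    (hstrict : ∀ t ∈ Set.Icc (0:ℝ) 1, φ (G - g (-t)) < φ (g (-t) - G))
    (hgsum : ∀ t ∈ Set.Icc (0:ℝ) 1, 0 ≤ g (-t) + g t)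
    (hcal : Calibrated (Hg d g G) (marginLoss φ) (advLoss γ)) :
    ∀ t ∈ Set.Icc (0:ℝ) 1,
        φ (G - g (-t)) + φ (g (-t) - G) = φ (g t + G) + φ (-(g t) - G) ∧
        φ (G - g (-t)) + φ (g (-t) - G) <
          min (φ (Abar g γ t) + φ (-(Abar g γ t)))
              (φ (Alow g γ t) + φ (-(Alow g γ t))) := by
  have hd0 : 0 < d := by omega
  have hψa : ∀ a b : ℝ, 0 ≤ a → a ≤ b → φ b + φ (-b) ≤ φ a + φ (-a) := psi_anti hanti hqce
  have hglt : ∀ z : ℝ, z ≤ 1 + γ → g z < G := fun z hz => lt_of_le_of_lt (hgmono hz) hg1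
  have hggt : ∀ z : ℝ, -1 - γ ≤ z → -G < g z := fun z hz => lt_of_lt_of_le hg2 (hgmono hz)
  intro t ht
  obtain ⟨ht0, ht1⟩ := ht
  set x : EuclideanSpace ℝ (Fin d) :=
    t • EuclideanSpace.single (⟨0, by omega⟩ : Fin d) (1:ℝ) with hxdef
  have hx : ‖x‖ = t := by
    rw [hxdef, norm_smul, EuclideanSpace.norm_single]
    simp [abs_of_nonneg ht0]
  have hx1 : ‖x‖ ≤ 1 := by rw [hx]; exact ht1
  set c : ℝ := G - g (-t) with hcdef
  set R : ℝ := g t + G with hRdef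
  have e1 : g (-t) - G = -c := by rw [hcdef]; ring
  have e2 : -(g t) - G = -R := by rw [hRdef]; ring
  have hc : 0 < c := by
    by_contra hcn
    push_neg at hcn
    have h1 := hstrict t ⟨ht0, ht1⟩
    rw [e1] at h1
    exact absurd (hanti (by linarith : c ≤ -c)) (not_le.mpr h1)
  have hcR : c ≤ R := by
    have := hgsum t ⟨ht0, ht1⟩
    rw [hcdef, hRdef]; linarith
  have hgtG : g t < G := hglt t (by linarith)
  have hgtG' : -G < g (-t) := hggt (-t) (by linarith)
  have hR0 : 0 ≤ R := by
    have : g (-t) ≤ g t := hgmono (by linarith)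
    rw [hRdef]; linarith
  obtain ⟨ub, hubmem, hAbeq, hAbmax⟩ := abar_attained hgcont γ t ht0
  obtain ⟨ul, hulmem, hAleq, hAlmin⟩ := alow_attained hgcont γ t ht0
  set Ab : ℝ := Abar g γ t with hAbdef
  set Al : ℝ := Alow g γ t with hAldef
  have hubmem1 := hubmem.1
  have hubmem2 := hubmem.2
  have hulmem1 := hulmem.1
  have hulmem2 := hulmem.2
  have hψRc : φ R + φ (-R) ≤ φ c + φ (-c) := hψa c R hc.le hcR
  have hvalx : ∀ w : EuclideanSpace ℝ (Fin d), ‖w‖ = 1 → ∀ b : ℝ, |b| ≤ G →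
      -c ≤ g ⟪w, x⟫ + b ∧ g ⟪w, x⟫ + b ≤ R := by
    intro w hw b hb
    have hu := abs_le.mp ((abs_inner_le hw (x := x)).trans_eq hx)
    obtain ⟨hb1, hb2⟩ := abs_le.mp hb
    have h1 : g (-t) ≤ g ⟪w, x⟫ := hgmono hu.1
    have h2 : g ⟪w, x⟫ ≤ g t := hgmono hu.2
    exact ⟨by rw [hcdef]; linarith, by rw [hRdef]; linarith⟩
  clear_value c R Ab Al
  -- Step 1: establish (i)
  have hiR : φ c + φ (-c) = φ R + φ (-R) := by
    by_contra hne
    have hlt : φ R + φ (-R) < φ c + φ (-c) := lt_of_le_of_ne hψRc (fun h => hne h.symm)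
    obtain ⟨B₀, hB₀⟩ := hbdd
    set B : ℝ := B₀ + 1 with hBdef
    have hB : ∀ z : ℝ, φ z ≤ B := fun z => by have := hB₀ z; rw [hBdef]; linarith
    have hBpos : 0 < B := lt_of_le_of_lt (hφ0 0) (by have := hB₀ 0; rw [hBdef]; linarith)
    set D : ℝ := (φ c + φ (-c)) - (φ R + φ (-R)) with hDdef
    have hDpos : 0 < D := by rw [hDdef]; linarith
    set κ : ℝ := min (1/4) (D / (8*B)) with hκdef
    have hκ0 : 0 < κ := lt_min (by norm_num) (div_pos hDpos (by linarith))
    have hκ4 : κ ≤ 1/4 := min_le_left _ _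
    have hκB : κ * B ≤ D / 8 := by
      have h1 : κ ≤ D / (8*B) := min_le_right _ _
      have h2 : κ * B ≤ (D / (8*B)) * B := mul_le_mul_of_nonneg_right h1 hBpos.le
      have h3 : (D / (8*B)) * B = D / 8 := by field_simp
      linarith
    set η : ℝ := 1/2 - κ with hηdef
    have hη0 : 0 ≤ η := by rw [hηdef]; linarith
    have hη1 : η ≤ 1 := by rw [hηdef]; linarith
    clear_value B D κ η
    obtain ⟨δ, hδ0, hspec⟩ := hcal (2*κ) (by linarith) η ⟨hη0, hη1⟩ x hx1
    have hmin2 : minInnerRisk (advLoss γ) (Hg d g G) x η = min η (1 - η) :=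
      minInnerRisk_adv hγ0 hgmono hG hg1 hg2 hd0 hx1 ⟨hη0, hη1⟩
    have hFcont : Continuous fun v : ℝ => η * φ v + (1-η) * φ (-v) :=
      (continuous_const.mul hcont).add
        (continuous_const.mul (hcont.comp continuous_neg))
    obtain ⟨v₀, hv₀mem, hv₀min⟩ := isCompact_Icc.exists_isMinOn
      (Set.nonempty_Icc.mpr hR0) hFcont.continuousOn
    obtain ⟨hv₀0, hv₀R⟩ := hv₀mem
    have hFR : η * φ R + (1-η) * φ (-R) < η * φ (-c) + (1-η) * φ c := by
      have hp : κ * (φ (-R) - φ c - φ R + φ (-c)) ≤ κ * (2*B) :=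
        mul_le_mul_of_nonneg_left
          (by have := hB (-R); have := hB (-c); have := hφ0 c; have := hφ0 R; linarith)
          hκ0.le
      have hD2 : (φ c + φ (-c)) - (φ R + φ (-R)) = D := by rw [hDdef]
      rw [hηdef]
      linarith [hp, hκB, hDpos, hD2]
    have hFv₀R : η * φ v₀ + (1-η) * φ (-v₀) ≤ η * φ R + (1-η) * φ (-R) :=
      hv₀min ⟨hR0, le_refl R⟩
    -- the margin-minimal risk equals the value at v₀
    have hbv : |v₀ - g t| ≤ G := by
      rw [abs_le]
      constructor
      · linarith [hgtG]
      · have := hRdef.le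
        linarith [hv₀R]
    obtain ⟨w₁, hw₁, hw₁x⟩ := realize_extreme hd0 x 1 (Or.inl rfl)
    have hw₁t : ⟪w₁, x⟫ = t := by rw [hw₁x, one_mul, hx]
    have hval₀ : g ⟪w₁, x⟫ + (v₀ - g t) = v₀ := by rw [hw₁t]; ring
    have hM : minInnerRisk (marginLoss φ) (Hg d g G) x η = η * φ v₀ + (1-η) * φ (-v₀) := by
      apply minInnerRisk_eq
      · refine ⟨_, mem_Hg hw₁ hbv, ?_⟩
        rw [innerRisk_margin, hval₀]
      · rintro f ⟨w, b, hw, hb, rfl⟩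
        rw [innerRisk_margin]
        obtain ⟨hv1, hv2⟩ := hvalx w hw b hb
        set v := g ⟪w, x⟫ + b
        rcases le_or_gt 0 v with hvpos | hvneg
        · exact hv₀min ⟨hvpos, hv2⟩
        · have hψv : φ c + φ (-c) ≤ φ v + φ (-v) := by
            have := hψa (-v) c (by linarith) (by linarith)
            simp only [neg_neg] at this
            linarith
          have hφv : φ c ≤ φ (-v) := hanti (by linarith)
          have hFc : η * φ (-c) + (1-η) * φ c ≤ η * φ v + (1-η) * φ (-v) := by
            linarith [mul_nonneg hη0 (sub_nonneg.mpr hψv),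
              mul_nonneg (by rw [hηdef]; linarith : (0:ℝ) ≤ 1 - 2*η) (sub_nonneg.mpr hφv)]
          linarith
    -- apply calibration to the bad function realizing v₀
    have hbad := hspec _ (mem_Hg hw₁ hbv) (by rw [innerRisk_margin, hval₀, hM]; linarith)
    rw [innerRisk_adv hγ0 hgmono hw₁, hmin2, hw₁t] at hbad
    have hC : 0 ≤ g (t + γ) + (v₀ - g t) := by
      have : g t ≤ g (t + γ) := hgmono (by linarith)
      linarith
    rw [if_pos hC] at hbad
    have hA : (0:ℝ) ≤ η * (if g (t - γ) + (v₀ - g t) ≤ 0 then 1 else 0) := by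
      apply mul_nonneg hη0; split <;> norm_num
    rw [min_eq_left (by linarith : η ≤ 1 - η)] at hbad
    rw [hηdef] at hbad hA
    linarith
  -- Step 2: apply calibration at η = 1/2 to the two maximally-bad functions
  obtain ⟨δ, hδ0, hspec⟩ := hcal (1/4) (by norm_num) (1/2) ⟨by norm_num, by norm_num⟩ x hx1
  have hmin2 : minInnerRisk (advLoss γ) (Hg d g G) x (1/2) = min (1/2) (1 - 1/2) :=
    minInnerRisk_adv hγ0 hgmono hG hg1 hg2 hd0 hx1 ⟨by norm_num, by norm_num⟩
  have hM : minInnerRisk (marginLoss φ) (Hg d g G) x (1/2) =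
      (1/2) * φ (-c) + (1 - 1/2) * φ c := by
    apply minInnerRisk_eq
    · obtain ⟨w, hw, hwx⟩ := realize_extreme hd0 x (-1) (Or.inr rfl)
      refine ⟨_, mem_Hg hw (by rw [abs_neg, abs_of_nonneg hG] : |(-G)| ≤ G), ?_⟩
      rw [innerRisk_margin]
      have hv : g ⟪w, x⟫ + -G = -c := by rw [hwx, hx, hcdef]; ring_nf
      rw [hv, neg_neg]
    · rintro f ⟨w, b, hw, hb, rfl⟩
      rw [innerRisk_margin]
      obtain ⟨hv1, hv2⟩ := hvalx w hw b hb
      set v := g ⟪w, x⟫ + b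
      have hψv : φ c + φ (-c) ≤ φ v + φ (-v) := psi_ge hψa hc hcR hiR v hv1 hv2
      linarith
  have key : ∀ u : ℝ, u ∈ Set.Icc (-t) t → ∀ s : ℝ, s = u - γ ∨ s = u + γ →
      g (u - γ) ≤ g s →
      (1/2) * φ (-c) + (1 - 1/2) * φ c + δ ≤
        (1/2) * φ (g u - g s) + (1 - 1/2) * φ (-(g u - g s)) := by
    intro u hu s hs hmono
    obtain ⟨w, hw, hwx⟩ := realize_mid hd t u ht0 (abs_le.mpr ⟨hu.1, hu.2⟩)
    have hwxu : ⟪w, x⟫ = u := hwx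
    have hsb : -1 - γ ≤ s ∧ s ≤ 1 + γ := by
      rcases hs with rfl | rfl
      · exact ⟨by linarith [hu.1], by linarith [hu.2]⟩
      · exact ⟨by linarith [hu.1], by linarith [hu.2]⟩
    have hb : |(-g s)| ≤ G := by
      rw [abs_neg, abs_le]
      exact ⟨by have := hggt s hsb.1; linarith, by have := hglt s hsb.2; linarith⟩
    have hbadrisk : ¬ (innerRisk (advLoss γ) (fun z => g ⟪w, z⟫ + -g s) x (1/2) <
        minInnerRisk (advLoss γ) (Hg d g G) x (1/2) + 1/4) := by
      rw [innerRisk_adv hγ0 hgmono hw, hmin2, hwxu]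
      have hA : g (u - γ) + -g s ≤ 0 := by linarith
      have hC : 0 ≤ g (u + γ) + -g s := by
        have h1 : g s ≤ g (u + γ) := hgmono (by rcases hs with rfl | rfl <;> linarith)
        linarith
      rw [if_pos hA, if_pos hC]
      norm_num
    have h2 := mt (hspec _ (mem_Hg hw hb)) hbadrisk
    push_neg at h2
    rw [innerRisk_margin, hwxu, hM] at h2
    have heq : g u + -g s = g u - g s := by ring
    rw [heq] at h2
    exact h2
  constructor
  · rw [e1, e2]; exact hiR
  · rw [e1]
    rw [lt_min_iff]
    constructor
    · have h1 := key ub hubmem (ub - γ) (Or.inl rfl) (le_refl _)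
      rw [← hAbeq] at h1
      linarith
    · have h2 := key ul hulmem (ul + γ) (Or.inr rfl) (hgmono (by linarith))
      rw [← hAleq] at h2
      linarith


theorem stmt10 (d : ℕ) (hd : 2 ≤ d) (γ : ℝ) (hγ0 : 0 < γ) (hγ1 : γ < 1)
    (g : ℝ → ℝ) (hgmono : Monotone g) (hgcont : Continuous g)
    (G : ℝ) (hG : 0 ≤ G) (hg1 : g (1 + γ) < G) (hg2 : -G < g (-1 - γ))
    (φ : ℝ → ℝ) (hφ0 : ∀ t, 0 ≤ φ t) (hbdd : ∃ M, ∀ t, φ t ≤ M)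
    (hcont : Continuous φ) (hanti : Antitone φ)
    (hqce : QuasiconcaveOn ℝ Set.univ (fun t => φ t + φ (-t)))
    (hstrict : ∀ t ∈ Set.Icc (0:ℝ) 1, φ (G - g (-t)) < φ (g (-t) - G))
    (hgsum : ∀ t ∈ Set.Icc (0:ℝ) 1, 0 ≤ g (-t) + g t) :
    Calibrated (Hg d g G) (marginLoss φ) (advLoss γ) ↔
      ∀ t ∈ Set.Icc (0:ℝ) 1,
        φ (G - g (-t)) + φ (g (-t) - G) = φ (g t + G) + φ (-(g t) - G) ∧
        φ (G - g (-t)) + φ (g (-t) - G) <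
          min (φ (Abar g γ t) + φ (-(Abar g γ t)))
              (φ (Alow g γ t) + φ (-(Alow g γ t))) := by
  constructor
  · exact fd_main d hd γ hγ0 hγ1 g hgmono hgcont G hG hg1 hg2 φ hφ0 hbdd hcont hanti hqce
      hstrict hgsum
  · intro hcond ε hε η hη x hx
    obtain ⟨hη0, hη1⟩ := hη
    rcases lt_trichotomy η (1/2) with hηc | hηc | hηc
    · exact bk_lt d hd γ hγ0 hγ1 g hgmono hgcont G hG hg1 hg2 φ hφ0 hbdd hcont hanti hqce
        hstrict hgsum hcond ε hε η hη0 hη1 hηc x hx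
    · exact bk_eq d hd γ hγ0 hγ1 g hgmono hgcont G hG hg1 hg2 φ hφ0 hbdd hcont hanti hqce
        hstrict hgsum hcond ε hε η hη0 hη1 hηc x hx
    · exact bk_gt d hd γ hγ0 hγ1 g hgmono hgcont G hG hg1 hg2 φ hφ0 hbdd hcont hanti hqce
        hstrict hgsum hcond ε hε η hη0 hη1 hηc x hx

end
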